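/- Let λ ∈ [1/2, 1]. Let F(z) = z + Σ_{n=2}^∞ (a_n z^n + conj(b_n) conj(z)^n) be a harmonic mapping of class HS_1^0(λ), i.e., Σ_{n=2}^∞ n(λn + 1 − λ)(|a_n| + |b_n|) ≤ 1 with absolutely summable coefficients. Let H(z) = z + Σ_{n=2}^∞ (A_n z^n + conj(B_n) conj(z)^n) be a harmonic mapping whose coefficients satisfy 2|A_n| ≤ n + 1 and 2|B_n| ≤ n − 1 for all n ≥ 2 (these bounds hold for every mapping in the class C_H^0 of normalized harmonic univalent convex mappings). Then the integral convolution (F⋄H)(z) = z + Σ_{n=2}^∞ ((a_n A_n / n) z^n + conj(b_n B_n / n) conj(z)^n) satisfies Σ_{n=2}^∞ n²(|a_n A_n| + |b_n B_n|)/n ≤ 1, i.e., F⋄H belongs to the class HC^0; consequently F⋄H is univalent on 𝔻 and its image (F⋄H)(𝔻) is a convex subset of ℂ. -/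

import Mathlib

open Complex Metric Set

/-- The harmonic mapping `z + Σ_{n=2}^∞ (a_n z^n + conj(b_n) conj(z)^n)`. -/
noncomputable def harmMap (a b : ℕ → ℂ) (z : ℂ) : ℂ :=
  z + ∑' n : ℕ, if 2 ≤ n then
    a n * z ^ n + (starRingEnd ℂ) (b n) * ((starRingEnd ℂ) z) ^ n else 0


open Complex Metric Set Finset
open scoped NNReal

noncomputable section
namespace HCX

/-- `E t = exp (i t)` -/
def E (t : ℝ) : ℂ := Complex.exp (t * I)

lemma norm_E (t : ℝ) : ‖E t‖ = 1 := by
  simp [E, Complex.norm_exp]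

lemma E_ne_zero (t : ℝ) : E t ≠ 0 := Complex.exp_ne_zero _

lemma E_add (s t : ℝ) : E (s + t) = E s * E t := by
  simp [E, ← Complex.exp_add]; ring_nf

lemma conj_E (t : ℝ) : (starRingEnd ℂ) (E t) = E (-t) := by
  rw [E, ← Complex.exp_conj]
  simp [E]

lemma E_mul_E_neg (t : ℝ) : E t * E (-t) = 1 := by
  rw [← E_add]; simp [E]

lemma hasDerivAt_E_lin (c t : ℝ) :
    HasDerivAt (fun θ => E (c * θ)) (c * I * E (c * t)) t := by
  have h1 : HasDerivAt (fun θ : ℝ => (θ : ℂ) * ((c : ℂ) * I)) ((c : ℂ) * I) t := by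
    simpa using (Complex.ofRealCLM.hasDerivAt (x := t)).mul_const ((c : ℂ) * I)
  have h2 := h1.cexp
  have he : (fun θ : ℝ => E (c * θ)) = fun θ : ℝ => Complex.exp ((θ : ℂ) * ((c : ℂ) * I)) := by
    funext θ; rw [E]; push_cast; ring_nf
  rw [he, E]
  convert h2 using 1
  push_cast; ring_nf

lemma hasDerivAt_E (t : ℝ) : HasDerivAt E (I * E t) t := by
  have := hasDerivAt_E_lin 1 t
  simp only [one_mul, Complex.ofReal_one] at this
  exact this

lemma E_pow (t : ℝ) (n : ℕ) : E t ^ n = E (n * t) := by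
  rw [E, E, ← Complex.exp_nat_mul]
  push_cast; ring_nf

lemma E_nat_two_pi (n : ℕ) : E (n * (2 * Real.pi)) = 1 := by
  rw [E]
  have := Complex.exp_nat_mul_two_pi_mul_I n
  rw [← this]
  push_cast; ring_nf

lemma E_periodic : Function.Periodic E (2 * Real.pi) := by
  intro t
  rw [E_add]
  have := E_nat_two_pi 1
  simp only [Nat.cast_one, one_mul] at this
  rw [this, mul_one]




variable (p q : ℕ → ℂ)

/-- master weight -/
def wt (n : ℕ) : ℝ :=
  if 2 ≤ n then (n:ℝ)^2 * ‖p n‖ + ((n:ℝ)^2 + 2*n) * ‖q n‖ else 0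
def w0 (n : ℕ) : ℝ := if 2 ≤ n then ‖p n‖ + ‖q n‖ else 0
def w1 (n : ℕ) : ℝ := if 2 ≤ n then (n:ℝ) * (‖p n‖ + ‖q n‖) else 0
def w2 (n : ℕ) : ℝ := if 2 ≤ n then (n:ℝ)^2 * (‖p n‖ + ‖q n‖) else 0
def w3 (n : ℕ) : ℝ :=
  if 2 ≤ n then ((n:ℝ)^2 - n) * ‖p n‖ + ((n:ℝ)^2 + n) * ‖q n‖ else 0

lemma wt_nonneg (n : ℕ) : 0 ≤ wt p q n := by
  unfold wt; split_ifs with h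
  · have h2 : (2:ℝ) ≤ (n:ℝ) := by exact_mod_cast h
    have := norm_nonneg (p n); have := norm_nonneg (q n); nlinarith
  · exact le_refl 0

lemma w0_nonneg (n : ℕ) : 0 ≤ w0 p q n := by
  unfold w0; split_ifs; · positivity
  · exact le_refl 0
lemma w1_nonneg (n : ℕ) : 0 ≤ w1 p q n := by
  unfold w1; split_ifs; · positivity
  · exact le_refl 0
lemma w2_nonneg (n : ℕ) : 0 ≤ w2 p q n := by
  unfold w2; split_ifs; · positivity
  · exact le_refl 0
lemma w3_nonneg (n : ℕ) : 0 ≤ w3 p q n := by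
  unfold w3; split_ifs with h
  · have h2 : (2:ℝ) ≤ (n:ℝ) := by exact_mod_cast h
    have hp := norm_nonneg (p n); have hq := norm_nonneg (q n)
    have h3 : (0:ℝ) ≤ (n:ℝ)^2 - n := by nlinarith
    have h4 : (0:ℝ) ≤ (n:ℝ)^2 + n := by nlinarith
    exact add_nonneg (mul_nonneg h3 hp) (mul_nonneg h4 hq)
  · exact le_refl 0

lemma two_w1_le (n : ℕ) : 2 * w1 p q n ≤ wt p q n := by
  unfold w1 wt; split_ifs with h
  · have h2 : (2:ℝ) ≤ (n:ℝ) := by exact_mod_cast h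
    have hp := norm_nonneg (p n); have hq := norm_nonneg (q n)
    nlinarith [mul_nonneg (show (0:ℝ) ≤ (n:ℝ)^2 - 2*n by nlinarith) hp,
      mul_nonneg (show (0:ℝ) ≤ (n:ℝ)^2 by positivity) hq]
  · norm_num

lemma four_w0_le (n : ℕ) : 4 * w0 p q n ≤ wt p q n := by
  unfold w0 wt; split_ifs with h
  · have h2 : (2:ℝ) ≤ (n:ℝ) := by exact_mod_cast h
    have hp := norm_nonneg (p n); have hq := norm_nonneg (q n)
    nlinarith [mul_nonneg (show (0:ℝ) ≤ (n:ℝ)^2 - 4 by nlinarith) hp,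
      mul_nonneg (show (0:ℝ) ≤ (n:ℝ)^2 + 2*n - 4 by nlinarith) hq]
  · norm_num

lemma w2_le (n : ℕ) : w2 p q n ≤ wt p q n := by
  unfold w2 wt; split_ifs with h
  · have h2 : (2:ℝ) ≤ (n:ℝ) := by exact_mod_cast h
    have := norm_nonneg (p n); have := norm_nonneg (q n); nlinarith
  · norm_num

lemma w1_add_w3_le (n : ℕ) : w1 p q n + w3 p q n ≤ wt p q n := by
  unfold w1 w3 wt; split_ifs with h
  · apply le_of_eq; ring
  · norm_num

variable {p q}

lemma summable_of_le_wt (hs : Summable (wt p q)) {r : ℕ → ℝ}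
    (hr : ∀ n, 0 ≤ r n) (hle : ∀ n, r n ≤ wt p q n) : Summable r :=
  Summable.of_nonneg_of_le hr hle hs

lemma w0_le (n : ℕ) : w0 p q n ≤ wt p q n := by
  have := four_w0_le p q n; have := w0_nonneg p q n; linarith
lemma w1_le (n : ℕ) : w1 p q n ≤ wt p q n := by
  have := two_w1_le p q n; have := w1_nonneg p q n; linarith
lemma w3_le (n : ℕ) : w3 p q n ≤ wt p q n := by
  have := w1_add_w3_le p q n; have := w1_nonneg p q n; linarith

lemma summable_w0 (hs : Summable (wt p q)) : Summable (w0 p q) :=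
  summable_of_le_wt hs (w0_nonneg p q) (w0_le)
lemma summable_w1 (hs : Summable (wt p q)) : Summable (w1 p q) :=
  summable_of_le_wt hs (w1_nonneg p q) (w1_le)
lemma summable_w2 (hs : Summable (wt p q)) : Summable (w2 p q) :=
  summable_of_le_wt hs (w2_nonneg p q) (fun n => w2_le p q n)
lemma summable_w3 (hs : Summable (wt p q)) : Summable (w3 p q) :=
  summable_of_le_wt hs (w3_nonneg p q) (w3_le)

lemma tsum_w1_le (hs : Summable (wt p q)) (hK : ∑' n, wt p q n ≤ 1) :
    ∑' n, w1 p q n ≤ 1/2 := by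
  have h := Summable.tsum_le_tsum (two_w1_le p q) ((summable_w1 hs).mul_left 2) hs
  rw [tsum_mul_left] at h
  linarith

lemma tsum_w0_le (hs : Summable (wt p q)) (hK : ∑' n, wt p q n ≤ 1) :
    ∑' n, w0 p q n ≤ 1/4 := by
  have h := Summable.tsum_le_tsum (four_w0_le p q) ((summable_w0 hs).mul_left 4) hs
  rw [tsum_mul_left] at h
  linarith

lemma tsum_w1_add_w3_le (hs : Summable (wt p q)) (hK : ∑' n, wt p q n ≤ 1) :
    ∑' n, w1 p q n + ∑' n, w3 p q n ≤ 1 := by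
  have h := Summable.tsum_le_tsum (w1_add_w3_le p q) ((summable_w1 hs).add (summable_w3 hs)) hs
  rw [Summable.tsum_add (summable_w1 hs) (summable_w3 hs)] at h
  linarith



variable {p q : ℕ → ℂ}

def g0 (p q : ℕ → ℂ) (n : ℕ) (θ : ℝ) : ℂ :=
  if 2 ≤ n then p n * E (n*θ) + (starRingEnd ℂ) (q n) * E (-(n*θ)) else 0
def g1 (p q : ℕ → ℂ) (n : ℕ) (θ : ℝ) : ℂ :=
  if 2 ≤ n then (n:ℂ) * (p n * E (n*θ) - (starRingEnd ℂ) (q n) * E (-(n*θ))) else 0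
def g2 (p q : ℕ → ℂ) (n : ℕ) (θ : ℝ) : ℂ :=
  if 2 ≤ n then (n:ℂ)^2 * (p n * E (n*θ) + (starRingEnd ℂ) (q n) * E (-(n*θ))) else 0

lemma norm_conj_mul_E (z : ℂ) (s t : ℝ) (c : ℂ) :
    ‖c * E s + (starRingEnd ℂ) z * E t‖ ≤ ‖c‖ + ‖z‖ := by
  calc ‖c * E s + (starRingEnd ℂ) z * E t‖ ≤ ‖c * E s‖ + ‖(starRingEnd ℂ) z * E t‖ :=
        norm_add_le _ _
    _ = ‖c‖ + ‖z‖ := by rw [norm_mul, norm_mul, norm_E, norm_E, RCLike.norm_conj]; ring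

lemma norm_g0_le (n : ℕ) (θ : ℝ) : ‖g0 p q n θ‖ ≤ w0 p q n := by
  unfold g0 w0; split_ifs with h
  · exact norm_conj_mul_E _ _ _ _
  · simp

lemma norm_g1_le (n : ℕ) (θ : ℝ) : ‖g1 p q n θ‖ ≤ w1 p q n := by
  unfold g1 w1; split_ifs with h
  · rw [norm_mul]
    have h1 : ‖p n * E (n*θ) - (starRingEnd ℂ) (q n) * E (-(n*θ))‖ ≤ ‖p n‖ + ‖q n‖ := by
      calc ‖p n * E (n*θ) - (starRingEnd ℂ) (q n) * E (-(n*θ))‖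
          ≤ ‖p n * E (n*θ)‖ + ‖(starRingEnd ℂ) (q n) * E (-(n*θ))‖ := norm_sub_le _ _
        _ = ‖p n‖ + ‖q n‖ := by
            rw [norm_mul, norm_mul, norm_E, norm_E, RCLike.norm_conj]; ring
    have h2 : ‖(n:ℂ)‖ = (n:ℝ) := by simp
    rw [h2]
    exact mul_le_mul_of_nonneg_left h1 (Nat.cast_nonneg n)
  · simp

lemma norm_g2_le (n : ℕ) (θ : ℝ) : ‖g2 p q n θ‖ ≤ w2 p q n := by
  unfold g2 w2; split_ifs with h
  · rw [norm_mul]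
    have h1 := norm_conj_mul_E (q n) (n*θ) (-(n*θ)) (p n)
    have h2 : ‖((n:ℂ))^2‖ = (n:ℝ)^2 := by
      rw [norm_pow]; simp
    rw [h2]
    exact mul_le_mul_of_nonneg_left h1 (by positivity)
  · simp

lemma norm_g2_sub_g1_le (n : ℕ) (θ : ℝ) : ‖g2 p q n θ - g1 p q n θ‖ ≤ w3 p q n := by
  unfold g2 g1 w3; split_ifs with h
  · have h2 : (2:ℝ) ≤ (n:ℝ) := by exact_mod_cast h
    have key : (n:ℂ)^2 * (p n * E (n*θ) + (starRingEnd ℂ) (q n) * E (-(n*θ)))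
        - (n:ℂ) * (p n * E (n*θ) - (starRingEnd ℂ) (q n) * E (-(n*θ)))
        = (((n:ℝ)^2 - n : ℝ) : ℂ) * (p n * E (n*θ))
          + (((n:ℝ)^2 + n : ℝ) : ℂ) * ((starRingEnd ℂ) (q n) * E (-(n*θ))) := by
      push_cast; ring
    rw [key]
    calc ‖_ + _‖ ≤ ‖(((n:ℝ)^2 - n : ℝ) : ℂ) * (p n * E (n*θ))‖
        + ‖(((n:ℝ)^2 + n : ℝ) : ℂ) * ((starRingEnd ℂ) (q n) * E (-(n*θ)))‖ := norm_add_le _ _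
      _ = ((n:ℝ)^2 - n) * ‖p n‖ + ((n:ℝ)^2 + n) * ‖q n‖ := by
          rw [norm_mul, norm_mul, norm_mul, norm_mul, norm_E, norm_E, RCLike.norm_conj,
            Complex.norm_real, Complex.norm_real, Real.norm_eq_abs, Real.norm_eq_abs,
            _root_.abs_of_nonneg (by nlinarith : (0:ℝ) ≤ (n:ℝ)^2 - n),
            _root_.abs_of_nonneg (by nlinarith : (0:ℝ) ≤ (n:ℝ)^2 + n)]
          ring
  · simp

lemma summable_g0 (hs : Summable (wt p q)) (θ : ℝ) : Summable (fun n => g0 p q n θ) :=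
  Summable.of_norm_bounded (summable_w0 hs) (fun n => norm_g0_le n θ)
lemma summable_g1 (hs : Summable (wt p q)) (θ : ℝ) : Summable (fun n => g1 p q n θ) :=
  Summable.of_norm_bounded (summable_w1 hs) (fun n => norm_g1_le n θ)
lemma summable_g2 (hs : Summable (wt p q)) (θ : ℝ) : Summable (fun n => g2 p q n θ) :=
  Summable.of_norm_bounded (summable_w2 hs) (fun n => norm_g2_le n θ)

lemma hasDerivAt_g0 (n : ℕ) (θ : ℝ) :
    HasDerivAt (fun t => g0 p q n t) (I * g1 p q n θ) θ := by
  by_cases h : 2 ≤ n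
  · simp only [g0, g1, if_pos h]
    have hp : HasDerivAt (fun t : ℝ => p n * E (n*t)) (p n * ((n:ℝ) * I * E (n*θ))) θ :=
      (hasDerivAt_E_lin n θ).const_mul (p n)
    have heq : (fun t : ℝ => (starRingEnd ℂ) (q n) * E (-(n*t)))
        = fun t : ℝ => (starRingEnd ℂ) (q n) * E ((-(n:ℝ))*t) := by
      funext t; ring_nf
    have hq : HasDerivAt (fun t : ℝ => (starRingEnd ℂ) (q n) * E (-(n*t)))
        ((starRingEnd ℂ) (q n) * ((-(n:ℝ)) * I * E (-(n*θ)))) θ := by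
      rw [heq]
      have := (hasDerivAt_E_lin (-(n:ℝ)) θ).const_mul ((starRingEnd ℂ) (q n))
      convert this using 2
      case e'_4 => rfl
      push_cast; ring_nf
    have := hp.add hq
    convert this using 1
    case e'_4 => rfl
    case e'_8 => rfl
    push_cast; ring
  · simp only [g0, g1, if_neg h]
    simpa using (hasDerivAt_const θ (0:ℂ)).mul_const (0:ℂ)

lemma hasDerivAt_g1 (n : ℕ) (θ : ℝ) :
    HasDerivAt (fun t => g1 p q n t) (I * g2 p q n θ) θ := by
  by_cases h : 2 ≤ n
  · simp only [g1, g2, if_pos h]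
    have hp : HasDerivAt (fun t : ℝ => p n * E (n*t)) (p n * ((n:ℝ) * I * E (n*θ))) θ :=
      (hasDerivAt_E_lin n θ).const_mul (p n)
    have heq : (fun t : ℝ => (starRingEnd ℂ) (q n) * E (-(n*t)))
        = fun t : ℝ => (starRingEnd ℂ) (q n) * E ((-(n:ℝ))*t) := by
      funext t; ring_nf
    have hq : HasDerivAt (fun t : ℝ => (starRingEnd ℂ) (q n) * E (-(n*t)))
        ((starRingEnd ℂ) (q n) * ((-(n:ℝ)) * I * E (-(n*θ)))) θ := by
      rw [heq]
      have := (hasDerivAt_E_lin (-(n:ℝ)) θ).const_mul ((starRingEnd ℂ) (q n))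
      convert this using 2
      case e'_4 => rfl
      push_cast; ring_nf
    have := (hp.sub hq).const_mul (n:ℂ)
    convert this using 1
    case e'_4 => rfl
    case e'_8 => rfl
    push_cast; ring
  · simp only [g1, g2, if_neg h]
    simpa using (hasDerivAt_const θ (0:ℂ)).mul_const (0:ℂ)

def cγ (p q : ℕ → ℂ) (θ : ℝ) : ℂ := E θ + ∑' n, g0 p q n θ
def cw (p q : ℕ → ℂ) (θ : ℝ) : ℂ := E θ + ∑' n, g1 p q n θ
def cu (p q : ℕ → ℂ) (θ : ℝ) : ℂ := E θ + ∑' n, g2 p q n θ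

lemma hasDerivAt_cγ (hs : Summable (wt p q)) (θ : ℝ) :
    HasDerivAt (cγ p q) (I * cw p q θ) θ := by
  have ht : HasDerivAt (fun t => ∑' n, g0 p q n t) (∑' n, I * g1 p q n θ) θ :=
    hasDerivAt_tsum (summable_w1 hs) (fun n t => hasDerivAt_g0 n t)
      (fun n t => by
        rw [norm_mul, Complex.norm_I, one_mul]; exact norm_g1_le n t)
      (summable_g0 hs 0) θ
  have := (hasDerivAt_E θ).add ht
  unfold cγ
  convert this using 1
  case e'_4 => rfl
  case e'_8 => rfl
  rw [tsum_mul_left]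
  unfold cw; ring

lemma hasDerivAt_cw (hs : Summable (wt p q)) (θ : ℝ) :
    HasDerivAt (cw p q) (I * cu p q θ) θ := by
  have ht : HasDerivAt (fun t => ∑' n, g1 p q n t) (∑' n, I * g2 p q n θ) θ :=
    hasDerivAt_tsum (summable_w2 hs) (fun n t => hasDerivAt_g1 n t)
      (fun n t => by
        rw [norm_mul, Complex.norm_I, one_mul]; exact norm_g2_le n t)
      (summable_g1 hs 0) θ
  have := (hasDerivAt_E θ).add ht
  unfold cw
  convert this using 1
  case e'_4 => rfl
  case e'_8 => rfl
  rw [tsum_mul_left]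
  unfold cu; ring

lemma norm_cw_sub_E (hs : Summable (wt p q)) (θ : ℝ) :
    ‖cw p q θ - E θ‖ ≤ ∑' n, w1 p q n := by
  unfold cw
  rw [add_sub_cancel_left]
  calc ‖∑' n, g1 p q n θ‖ ≤ ∑' n, ‖g1 p q n θ‖ :=
        norm_tsum_le_tsum_norm ((summable_g1 hs θ).norm)
    _ ≤ ∑' n, w1 p q n :=
        Summable.tsum_le_tsum (fun n => norm_g1_le n θ) ((summable_g1 hs θ).norm) (summable_w1 hs)

lemma norm_cw_lower (hs : Summable (wt p q)) (θ : ℝ) :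
    1 - ∑' n, w1 p q n ≤ ‖cw p q θ‖ := by
  have h := norm_cw_sub_E hs θ
  have h2 : ‖E θ‖ - ‖cw p q θ‖ ≤ ‖cw p q θ - E θ‖ := by
    rw [norm_sub_rev]
    exact norm_sub_norm_le _ _
  rw [norm_E] at h2
  linarith

lemma norm_cw_ge_half (hs : Summable (wt p q)) (hK : ∑' n, wt p q n ≤ 1) (θ : ℝ) :
    1/2 ≤ ‖cw p q θ‖ := by
  have := norm_cw_lower hs θ
  have := tsum_w1_le hs hK
  linarith

lemma cw_ne_zero (hs : Summable (wt p q)) (hK : ∑' n, wt p q n ≤ 1) (θ : ℝ) :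
    cw p q θ ≠ 0 := by
  intro h
  have := norm_cw_ge_half hs hK θ
  rw [h, norm_zero] at this
  linarith

lemma norm_cu_sub_cw (hs : Summable (wt p q)) (θ : ℝ) :
    ‖cu p q θ - cw p q θ‖ ≤ ∑' n, w3 p q n := by
  have heq : cu p q θ - cw p q θ = ∑' n, (g2 p q n θ - g1 p q n θ) := by
    unfold cu cw
    rw [Summable.tsum_sub (summable_g2 hs θ) (summable_g1 hs θ)]
    ring
  rw [heq]
  have hsum : Summable (fun n => g2 p q n θ - g1 p q n θ) :=
    (summable_g2 hs θ).sub (summable_g1 hs θ)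
  calc ‖∑' n, (g2 p q n θ - g1 p q n θ)‖ ≤ ∑' n, ‖g2 p q n θ - g1 p q n θ‖ :=
        norm_tsum_le_tsum_norm hsum.norm
    _ ≤ ∑' n, w3 p q n :=
        Summable.tsum_le_tsum (fun n => norm_g2_sub_g1_le n θ) hsum.norm (summable_w3 hs)

lemma re_cu_conj_cw_nonneg (hs : Summable (wt p q)) (hK : ∑' n, wt p q n ≤ 1) (θ : ℝ) :
    0 ≤ (cu p q θ * (starRingEnd ℂ) (cw p q θ)).re := by
  have h1 : cu p q θ * (starRingEnd ℂ) (cw p q θ)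
      = cw p q θ * (starRingEnd ℂ) (cw p q θ)
        + (cu p q θ - cw p q θ) * (starRingEnd ℂ) (cw p q θ) := by ring
  rw [h1]
  rw [Complex.mul_conj]
  have hY : ‖(cu p q θ - cw p q θ) * (starRingEnd ℂ) (cw p q θ)‖
      ≤ (∑' n, w3 p q n) * ‖cw p q θ‖ := by
    rw [norm_mul, RCLike.norm_conj]
    exact mul_le_mul_of_nonneg_right (norm_cu_sub_cw hs θ) (norm_nonneg _)
  have hre : -(((∑' n, w3 p q n) * ‖cw p q θ‖)) ≤ ((cu p q θ - cw p q θ) * (starRingEnd ℂ) (cw p q θ)).re := by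
    have := Complex.abs_re_le_norm ((cu p q θ - cw p q θ) * (starRingEnd ℂ) (cw p q θ))
    have := abs_le.mp (le_trans this hY)
    linarith [this.1]
  have hns : (Complex.normSq (cw p q θ) : ℝ) = ‖cw p q θ‖^2 := by
    rw [Complex.normSq_eq_norm_sq]
  have hW1 : 1 - ∑' n, w1 p q n ≤ ‖cw p q θ‖ := norm_cw_lower hs θ
  have hW13 : ∑' n, w1 p q n + ∑' n, w3 p q n ≤ 1 := tsum_w1_add_w3_le hs hK
  have hw3nn : 0 ≤ ∑' n, w3 p q n := tsum_nonneg (w3_nonneg p q)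
  simp only [Complex.add_re, Complex.ofReal_re]
  rw [hns]
  nlinarith [norm_nonneg (cw p q θ)]


variable {p q : ℕ → ℂ}

def cm (p q : ℕ → ℂ) (θ : ℝ) : ℂ := cw p q θ * E (-θ)

lemma cm_mul_E (θ : ℝ) : cm p q θ * E θ = cw p q θ := by
  unfold cm
  rw [mul_assoc, mul_comm (E (-θ)) (E θ), E_mul_E_neg, mul_one]

lemma norm_cm_sub_one (hs : Summable (wt p q)) (θ : ℝ) :
    ‖cm p q θ - 1‖ ≤ ∑' n, w1 p q n := by
  have h : cm p q θ - 1 = (cw p q θ - E θ) * E (-θ) := by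
    unfold cm; rw [sub_mul, E_mul_E_neg]
  rw [h, norm_mul, norm_E, mul_one]
  exact norm_cw_sub_E hs θ

lemma re_cm_ge_half (hs : Summable (wt p q)) (hK : ∑' n, wt p q n ≤ 1) (θ : ℝ) :
    1/2 ≤ (cm p q θ).re := by
  have h1 := norm_cm_sub_one hs θ
  have h2 := tsum_w1_le hs hK
  have h3 := Complex.abs_re_le_norm (cm p q θ - 1)
  have h4 : |(cm p q θ - 1).re| ≤ 1/2 := by linarith
  have h5 := (abs_le.mp h4).1
  have h6 : (cm p q θ - 1).re = (cm p q θ).re - 1 := by simp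
  linarith [h6 ▸ h5]

lemma cm_ne_zero (hs : Summable (wt p q)) (hK : ∑' n, wt p q n ≤ 1) (θ : ℝ) :
    cm p q θ ≠ 0 := by
  intro h
  have := re_cm_ge_half hs hK θ
  rw [h] at this; simp at this; linarith

lemma cm_slit (hs : Summable (wt p q)) (hK : ∑' n, wt p q n ≤ 1) (θ : ℝ) :
    cm p q θ ∈ Complex.slitPlane := by
  rw [Complex.mem_slitPlane_iff]
  left; linarith [re_cm_ge_half hs hK θ]

lemma hasDerivAt_cm (hs : Summable (wt p q)) (θ : ℝ) :
    HasDerivAt (cm p q) (I * E (-θ) * (cu p q θ - cw p q θ)) θ := by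
  have hE : HasDerivAt (fun t : ℝ => E (-t)) ((-1 : ℝ) * I * E (-θ)) θ := by
    have := hasDerivAt_E_lin (-1) θ
    simp only [neg_one_mul] at this
    simpa using this
  have := (hasDerivAt_cw hs θ).mul hE
  unfold cm
  convert this using 1
  case e'_4 => rfl
  case e'_8 => rfl
  push_cast; ring

def cA (p q : ℕ → ℂ) (θ : ℝ) : ℝ := θ + (Complex.log (cm p q θ)).im

lemma hasDerivAt_cA (hs : Summable (wt p q)) (hK : ∑' n, wt p q n ≤ 1) (θ : ℝ) :
    HasDerivAt (cA p q) ((cu p q θ / cw p q θ).re) θ := by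
  have hlog : HasDerivAt (fun t => Complex.log (cm p q t))
      ((I * E (-θ) * (cu p q θ - cw p q θ)) / cm p q θ) θ :=
    (hasDerivAt_cm hs θ).clog_real (cm_slit hs hK θ)
  have him : HasDerivAt (fun t => (Complex.log (cm p q t)).im)
      (((I * E (-θ) * (cu p q θ - cw p q θ)) / cm p q θ).im) θ :=
    Complex.imCLM.hasFDerivAt.comp_hasDerivAt θ hlog
  have hsum := (hasDerivAt_id θ).add him
  have hval : 1 + ((I * E (-θ) * (cu p q θ - cw p q θ)) / cm p q θ).im
      = (cu p q θ / cw p q θ).re := by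
    have hq1 : (I * E (-θ) * (cu p q θ - cw p q θ)) / cm p q θ
        = I * ((cu p q θ - cw p q θ) / cw p q θ) := by
      unfold cm
      rw [div_eq_iff (mul_ne_zero (cw_ne_zero hs hK θ) (E_ne_zero (-θ)))]
      field_simp [cw_ne_zero hs hK θ]
    rw [hq1]
    have : (I * ((cu p q θ - cw p q θ) / cw p q θ)).im
        = ((cu p q θ - cw p q θ) / cw p q θ).re := by
      rw [mul_comm, Complex.mul_I_im]
    rw [this, sub_div, div_self (cw_ne_zero hs hK θ), Complex.sub_re, Complex.one_re]
    ring
  have : HasDerivAt (fun t => t + (Complex.log (cm p q t)).im)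
      ((cu p q θ / cw p q θ).re) θ := by
    rw [← hval]; exact hsum
  exact this

lemma div_re_nonneg_of (z w : ℂ) (h : 0 ≤ (z * (starRingEnd ℂ) w).re) : 0 ≤ (z / w).re := by
  have key : (z / w).re = (z * (starRingEnd ℂ) w).re / Complex.normSq w := by
    rw [Complex.div_re, Complex.mul_re, Complex.conj_re, Complex.conj_im]
    ring
  rw [key]
  exact div_nonneg h (Complex.normSq_nonneg w)

lemma deriv_cA_nonneg (hs : Summable (wt p q)) (hK : ∑' n, wt p q n ≤ 1) (θ : ℝ) :
    0 ≤ (cu p q θ / cw p q θ).re :=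
  div_re_nonneg_of _ _ (re_cu_conj_cw_nonneg hs hK θ)

lemma monotone_cA (hs : Summable (wt p q)) (hK : ∑' n, wt p q n ≤ 1) :
    Monotone (cA p q) := by
  apply monotone_of_deriv_nonneg
  · exact fun θ => (hasDerivAt_cA hs hK θ).differentiableAt
  · intro θ
    rw [(hasDerivAt_cA hs hK θ).deriv]
    exact deriv_cA_nonneg hs hK θ

lemma E_lin_periodic (n : ℕ) (θ : ℝ) : E (n * (θ + 2*Real.pi)) = E (n * θ) := by
  have : (n : ℝ) * (θ + 2*Real.pi) = n * θ + n * (2*Real.pi) := by ring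
  rw [this, E_add, E_nat_two_pi, mul_one]

lemma E_lin_periodic_neg (n : ℕ) (θ : ℝ) : E (-(n * (θ + 2*Real.pi))) = E (-(n * θ)) := by
  have h1 : -((n:ℝ) * (θ + 2*Real.pi)) = -(n * θ) + -(n * (2*Real.pi)) := by ring
  rw [h1, E_add]
  have h2 : E (-((n:ℝ) * (2*Real.pi))) = 1 := by
    have := E_mul_E_neg ((n:ℝ) * (2*Real.pi))
    rw [E_nat_two_pi, one_mul] at this
    exact this
  rw [h2, mul_one]

lemma cγ_periodic : Function.Periodic (cγ p q) (2*Real.pi) := by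
  intro θ
  unfold cγ
  rw [E_periodic θ]
  congr 1
  apply tsum_congr
  intro n
  unfold g0
  split_ifs with h
  · rw [E_lin_periodic, E_lin_periodic_neg]
  · rfl

lemma cw_periodic : Function.Periodic (cw p q) (2*Real.pi) := by
  intro θ
  unfold cw
  rw [E_periodic θ]
  congr 1
  apply tsum_congr
  intro n
  unfold g1
  split_ifs with h
  · rw [E_lin_periodic, E_lin_periodic_neg]
  · rfl

lemma cm_periodic : Function.Periodic (cm p q) (2*Real.pi) := by
  intro θ
  unfold cm
  rw [cw_periodic θ]
  congr 1
  have h1 : -(θ + 2*Real.pi) = -θ + -(2*Real.pi) := by ring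
  rw [h1, E_add]
  have h2 : E (-(2*Real.pi)) = 1 := by
    have := E_mul_E_neg (2*Real.pi)
    have h3 := E_periodic 0
    rw [zero_add] at h3
    have h4 : E (0:ℝ) = 1 := by simp [E]
    rw [h4] at h3
    rw [h3, one_mul] at this
    exact this
  rw [h2, mul_one]

lemma cA_periodic (θ : ℝ) : cA p q (θ + 2*Real.pi) = cA p q θ + 2*Real.pi := by
  unfold cA
  rw [cm_periodic θ]
  ring



variable {p q : ℕ → ℂ}

def ψf (p q : ℕ → ℂ) (θ0 θ : ℝ) : ℝ :=
  ((cγ p q θ - cγ p q θ0) * (starRingEnd ℂ) (cw p q θ0)).re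

lemma hasDerivAt_ψf (hs : Summable (wt p q)) (θ0 θ : ℝ) :
    HasDerivAt (ψf p q θ0) ((I * cw p q θ * (starRingEnd ℂ) (cw p q θ0)).re) θ := by
  have base : HasDerivAt (fun t => (cγ p q t - cγ p q θ0) * (starRingEnd ℂ) (cw p q θ0))
      (I * cw p q θ * (starRingEnd ℂ) (cw p q θ0)) θ :=
    ((hasDerivAt_cγ hs θ).sub_const _).mul_const _
  exact Complex.reCLM.hasFDerivAt.comp_hasDerivAt θ base

lemma wcirc (hs : Summable (wt p q)) (hK : ∑' n, wt p q n ≤ 1) (θ : ℝ) :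
    cw p q θ = (‖cm p q θ‖ : ℂ) * E (cA p q θ) := by
  have hm := cm_ne_zero hs hK θ
  have hlog : Complex.exp (Complex.log (cm p q θ)) = cm p q θ := Complex.exp_log hm
  have hnorm : (‖cm p q θ‖ : ℝ) = Real.exp ((Complex.log (cm p q θ)).re) := by
    conv_lhs => rw [← hlog]
    rw [Complex.norm_exp]
  have key : (‖cm p q θ‖ : ℂ) * E ((Complex.log (cm p q θ)).im) = cm p q θ := by
    rw [hnorm, Complex.ofReal_exp, E, ← Complex.exp_add]
    conv_rhs => rw [← hlog]
    congr 1
    exact Complex.re_add_im _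
  unfold cA
  rw [E_add, ← mul_assoc, mul_comm ((‖cm p q θ‖ : ℂ)) (E θ), mul_assoc, key, mul_comm]
  exact (cm_mul_E θ).symm

lemma re_I_E (x : ℝ) : (I * E x).re = - Real.sin x := by
  rw [E, Complex.exp_mul_I]
  simp [Complex.mul_re, Complex.add_re, Complex.cos_ofReal_re, Complex.sin_ofReal_im,
    Complex.add_im, Complex.cos_ofReal_im, Complex.sin_ofReal_re]

lemma deriv_ψf_eq (hs : Summable (wt p q)) (hK : ∑' n, wt p q n ≤ 1) (θ0 θ : ℝ) :
    (I * cw p q θ * (starRingEnd ℂ) (cw p q θ0)).re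
      = -(‖cm p q θ‖ * ‖cm p q θ0‖ * Real.sin (cA p q θ - cA p q θ0)) := by
  rw [wcirc hs hK θ, wcirc hs hK θ0]
  rw [map_mul, Complex.conj_ofReal, conj_E]
  have h1 : I * ((‖cm p q θ‖ : ℂ) * E (cA p q θ)) * ((‖cm p q θ0‖ : ℂ) * E (-(cA p q θ0)))
      = ((‖cm p q θ‖ * ‖cm p q θ0‖ : ℝ) : ℂ) * (I * (E (cA p q θ) * E (-(cA p q θ0)))) := by
    push_cast; ring
  rw [h1, ← E_add]
  have h2 : cA p q θ + -(cA p q θ0) = cA p q θ - cA p q θ0 := by ring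
  rw [h2, Complex.re_ofReal_mul, re_I_E]
  ring

lemma ψf_self (θ0 : ℝ) : ψf p q θ0 θ0 = 0 := by
  unfold ψf; rw [sub_self, zero_mul]; simp

lemma ψf_periodic (θ0 : ℝ) : Function.Periodic (ψf p q θ0) (2*Real.pi) := by
  intro θ; unfold ψf; rw [cγ_periodic θ]

lemma ψf_nonpos (hs : Summable (wt p q)) (hK : ∑' n, wt p q n ≤ 1) (θ0 θ : ℝ) :
    ψf p q θ0 θ ≤ 0 := by
  -- reduce to the fundamental interval
  have hper := ψf_periodic (p := p) (q := q) θ0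
  have h2π := Real.two_pi_pos
  have hred : ∀ θ' ∈ Icc θ0 (θ0 + 2*Real.pi), ψf p q θ0 θ' ≤ 0 := by
    intro θ' hθ'
    -- find θ1 where cA crosses cA θ0 + π
    have hcontA : ContinuousOn (cA p q) (Icc θ0 (θ0 + 2*Real.pi)) :=
      (fun x _ => ((hasDerivAt_cA hs hK x).continuousAt).continuousWithinAt)
    have hle : θ0 ≤ θ0 + 2*Real.pi := by linarith
    have hmem : cA p q θ0 + Real.pi ∈ Icc (cA p q θ0) (cA p q (θ0 + 2*Real.pi)) := by
      rw [cA_periodic]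
      constructor <;> [linarith [Real.pi_pos]; linarith [Real.pi_pos]]
    obtain ⟨θ1, hθ1mem, hθ1⟩ := intermediate_value_Icc hle hcontA hmem
    have hmono := monotone_cA hs hK
    have hψcont : ∀ s : Set ℝ, ContinuousOn (ψf p q θ0) s :=
      fun s x _ => ((hasDerivAt_ψf hs θ0 x).continuousAt).continuousWithinAt
    have hψdiff : ∀ s : Set ℝ, DifferentiableOn ℝ (ψf p q θ0) s :=
      fun s x _ => ((hasDerivAt_ψf hs θ0 x).differentiableAt).differentiableWithinAt
    -- antitone on [θ0, θ1]
    have hanti : AntitoneOn (ψf p q θ0) (Icc θ0 θ1) := by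
      apply antitoneOn_of_deriv_nonpos (convex_Icc _ _) (hψcont _) (hψdiff _)
      intro x hx
      rw [interior_Icc] at hx
      rw [(hasDerivAt_ψf hs θ0 x).deriv, deriv_ψf_eq hs hK θ0 x]
      have h0 : 0 ≤ cA p q x - cA p q θ0 := by
        have := hmono (le_of_lt hx.1); linarith
      have hπ : cA p q x - cA p q θ0 ≤ Real.pi := by
        have := hmono (le_of_lt hx.2); rw [hθ1] at this; linarith
      have hsin := Real.sin_nonneg_of_nonneg_of_le_pi h0 hπ
      have hn1 : (0:ℝ) ≤ ‖cm p q x‖ := norm_nonneg _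
      have hn2 : (0:ℝ) ≤ ‖cm p q θ0‖ := norm_nonneg _
      have := mul_nonneg (mul_nonneg hn1 hn2) hsin
      linarith
    -- monotone on [θ1, θ0 + 2π]
    have hmonoψ : MonotoneOn (ψf p q θ0) (Icc θ1 (θ0 + 2*Real.pi)) := by
      apply monotoneOn_of_deriv_nonneg (convex_Icc _ _) (hψcont _) (hψdiff _)
      intro x hx
      rw [interior_Icc] at hx
      rw [(hasDerivAt_ψf hs θ0 x).deriv, deriv_ψf_eq hs hK θ0 x]
      have hπ' : Real.pi ≤ cA p q x - cA p q θ0 := by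
        have := hmono (le_of_lt hx.1); rw [hθ1] at this; linarith
      have h2π' : cA p q x - cA p q θ0 ≤ 2*Real.pi := by
        have := hmono (le_of_lt hx.2)
        rw [cA_periodic] at this; linarith
      have hs0 : Real.sin (cA p q x - cA p q θ0) ≤ 0 := by
        have hnn := Real.sin_nonneg_of_nonneg_of_le_pi
          (show 0 ≤ cA p q x - cA p q θ0 - Real.pi by linarith)
          (show cA p q x - cA p q θ0 - Real.pi ≤ Real.pi by linarith)
        rw [Real.sin_sub_pi] at hnn
        linarith
      have hn1 : (0:ℝ) ≤ ‖cm p q x‖ := norm_nonneg _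
      have hn2 : (0:ℝ) ≤ ‖cm p q θ0‖ := norm_nonneg _
      have := mul_nonpos_of_nonneg_of_nonpos (mul_nonneg hn1 hn2) hs0
      linarith
    have hψend : ψf p q θ0 (θ0 + 2*Real.pi) = 0 := by
      have := hper θ0
      rw [ψf_self] at this; exact this
    rcases le_or_gt θ' θ1 with hcase | hcase
    · have h := hanti ⟨le_refl θ0, hθ1mem.1⟩ ⟨hθ'.1, hcase⟩ hθ'.1
      rw [ψf_self] at h
      exact h
    · have h := hmonoψ ⟨hcase.le, hθ'.2⟩ ⟨hθ1mem.2, le_refl _⟩ hθ'.2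
      rw [hψend] at h
      exact h
  -- general θ via periodic reduction
  have hmem := toIcoMod_mem_Ico h2π θ0 θ
  have heq : ψf p q θ0 (toIcoMod h2π θ0 θ) = ψf p q θ0 θ := by
    rw [show toIcoMod h2π θ0 θ = θ - toIcoDiv h2π θ0 θ • (2*Real.pi) from rfl]
    exact hper.sub_zsmul_eq _
  have := hred (toIcoMod h2π θ0 θ) ⟨hmem.1, hmem.2.le⟩
  rw [heq] at this
  exact this



variable {p q : ℕ → ℂ}

def ft (c : ℕ → ℂ) (n : ℕ) (z : ℂ) : ℂ := if 2 ≤ n then c n * z^n else 0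
def wc (c : ℕ → ℂ) (n : ℕ) : ℝ := if 2 ≤ n then ‖c n‖ else 0
def wc1 (c : ℕ → ℂ) (n : ℕ) : ℝ := if 2 ≤ n then (n:ℝ) * ‖c n‖ else 0

def Hol (p : ℕ → ℂ) (z : ℂ) : ℂ := z + ∑' n, ft p n z
def Gol (q : ℕ → ℂ) (z : ℂ) : ℂ := ∑' n, ft q n z
def Fm (p q : ℕ → ℂ) (z : ℂ) : ℂ := Hol p z + (starRingEnd ℂ) (Gol q z)

lemma wc_p_le (n : ℕ) : wc p n ≤ w0 p q n := by
  unfold wc w0; split_ifs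
  · linarith [norm_nonneg (q n)]
  · exact le_refl 0
lemma wc_q_le (n : ℕ) : wc q n ≤ w0 p q n := by
  unfold wc w0; split_ifs
  · linarith [norm_nonneg (p n)]
  · exact le_refl 0
lemma wc1_p_le (n : ℕ) : wc1 p n ≤ w1 p q n := by
  unfold wc1 w1; split_ifs with h
  · have h2 : (0:ℝ) ≤ (n:ℝ) := Nat.cast_nonneg n
    nlinarith [norm_nonneg (q n)]
  · exact le_refl 0
lemma wc1_q_le (n : ℕ) : wc1 q n ≤ w1 p q n := by
  unfold wc1 w1; split_ifs with h
  · have h2 : (0:ℝ) ≤ (n:ℝ) := Nat.cast_nonneg n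
    nlinarith [norm_nonneg (p n)]
  · exact le_refl 0
lemma wc_nonneg (c : ℕ → ℂ) (n : ℕ) : 0 ≤ wc c n := by
  unfold wc; split_ifs
  · exact norm_nonneg _
  · exact le_refl 0
lemma wc1_nonneg (c : ℕ → ℂ) (n : ℕ) : 0 ≤ wc1 c n := by
  unfold wc1; split_ifs
  · positivity
  · exact le_refl 0

lemma summable_wc_p (hs : Summable (wt p q)) : Summable (wc p) :=
  (summable_w0 hs).of_nonneg_of_le (wc_nonneg p) (fun n => wc_p_le n)
lemma summable_wc_q (hs : Summable (wt p q)) : Summable (wc q) :=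
  (summable_w0 hs).of_nonneg_of_le (wc_nonneg q) (fun n => wc_q_le n)
lemma summable_wc1_p (hs : Summable (wt p q)) : Summable (wc1 p) :=
  (summable_w1 hs).of_nonneg_of_le (wc1_nonneg p) (fun n => wc1_p_le n)
lemma summable_wc1_q (hs : Summable (wt p q)) : Summable (wc1 q) :=
  (summable_w1 hs).of_nonneg_of_le (wc1_nonneg q) (fun n => wc1_q_le n)

lemma norm_ft_le (c : ℕ → ℂ) (n : ℕ) {z : ℂ} (hz : ‖z‖ ≤ 1) : ‖ft c n z‖ ≤ wc c n := by
  unfold ft wc; split_ifs with h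
  · rw [norm_mul, norm_pow]
    calc ‖c n‖ * ‖z‖^n ≤ ‖c n‖ * 1 :=
          mul_le_mul_of_nonneg_left (pow_le_one₀ (norm_nonneg z) hz) (norm_nonneg _)
      _ = ‖c n‖ := mul_one _
  · simp

lemma summable_ft (hs : Summable (wt p q)) (c : ℕ → ℂ) (hc : Summable (wc c))
    {z : ℂ} (hz : ‖z‖ ≤ 1) : Summable (fun n => ft c n z) :=
  Summable.of_norm_bounded hc (fun n => norm_ft_le c n hz)

lemma norm_pow_sub_pow' (x y : ℂ) (hx : ‖x‖ ≤ 1) (hy : ‖y‖ ≤ 1) (n : ℕ) :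
    ‖x^n - y^n‖ ≤ (n:ℝ) * ‖x - y‖ := by
  induction n with
  | zero => simp
  | succ k ih =>
    have key : x^(k+1) - y^(k+1) = x * (x^k - y^k) + (x - y) * y^k := by ring
    rw [key]
    calc ‖x * (x^k - y^k) + (x - y) * y^k‖
        ≤ ‖x * (x^k - y^k)‖ + ‖(x - y) * y^k‖ := norm_add_le _ _
      _ ≤ 1 * ((k:ℝ) * ‖x - y‖) + ‖x - y‖ * 1 := by
          apply add_le_add
          · rw [norm_mul]
            exact mul_le_mul hx ih (norm_nonneg _) zero_le_one
          · rw [norm_mul]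
            apply mul_le_mul_of_nonneg_left _ (norm_nonneg _)
            rw [norm_pow]
            exact pow_le_one₀ (norm_nonneg y) hy
      _ = ((k+1 : ℕ):ℝ) * ‖x - y‖ := by push_cast; ring

lemma norm_ft_sub_le (c : ℕ → ℂ) (n : ℕ) {x y : ℂ} (hx : ‖x‖ ≤ 1) (hy : ‖y‖ ≤ 1) :
    ‖ft c n x - ft c n y‖ ≤ wc1 c n * ‖x - y‖ := by
  unfold ft wc1; split_ifs with h
  · have : c n * x^n - c n * y^n = c n * (x^n - y^n) := by ring
    rw [this, norm_mul]
    calc ‖c n‖ * ‖x^n - y^n‖ ≤ ‖c n‖ * ((n:ℝ) * ‖x - y‖) :=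
          mul_le_mul_of_nonneg_left (norm_pow_sub_pow' x y hx hy n) (norm_nonneg _)
      _ = (n:ℝ) * ‖c n‖ * ‖x - y‖ := by ring
  · simp

lemma norm_tsum_ft_sub_le (hs : Summable (wt p q)) (c : ℕ → ℂ) (hc : Summable (wc c))
    (hc1 : Summable (wc1 c)) {x y : ℂ} (hx : ‖x‖ ≤ 1) (hy : ‖y‖ ≤ 1) :
    ‖(∑' n, ft c n x) - (∑' n, ft c n y)‖ ≤ (∑' n, wc1 c n) * ‖x - y‖ := by
  rw [← Summable.tsum_sub (summable_ft hs c hc hx) (summable_ft hs c hc hy)]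
  have hsub : Summable (fun n => ft c n x - ft c n y) :=
    (summable_ft hs c hc hx).sub (summable_ft hs c hc hy)
  calc ‖∑' n, (ft c n x - ft c n y)‖ ≤ ∑' n, ‖ft c n x - ft c n y‖ :=
        norm_tsum_le_tsum_norm hsub.norm
    _ ≤ ∑' n, wc1 c n * ‖x - y‖ :=
        Summable.tsum_le_tsum (fun n => norm_ft_sub_le c n hx hy) hsub.norm (by
          simpa using hc1.mul_right ‖x - y‖)
    _ = (∑' n, wc1 c n) * ‖x - y‖ := tsum_mul_right

/-- The nonlinear part of `Fm` is `(∑' w1)`-Lipschitz on the closed unit ball. -/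
lemma Fm_sub_sub (hs : Summable (wt p q)) {x y : ℂ} (hx : ‖x‖ ≤ 1) (hy : ‖y‖ ≤ 1) :
    ‖Fm p q x - Fm p q y - (x - y)‖ ≤ (∑' n, w1 p q n) * ‖x - y‖ := by
  have key : Fm p q x - Fm p q y - (x - y)
      = ((∑' n, ft p n x) - (∑' n, ft p n y))
        + (starRingEnd ℂ) ((∑' n, ft q n x) - (∑' n, ft q n y)) := by
    unfold Fm Hol Gol
    rw [map_sub]
    ring
  rw [key]
  have h1 := norm_tsum_ft_sub_le hs p (summable_wc_p hs) (summable_wc1_p hs) hx hy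
  have h2 := norm_tsum_ft_sub_le hs q (summable_wc_q hs) (summable_wc1_q hs) hx hy
  calc ‖_ + _‖ ≤ ‖(∑' n, ft p n x) - (∑' n, ft p n y)‖
      + ‖(starRingEnd ℂ) ((∑' n, ft q n x) - (∑' n, ft q n y))‖ := norm_add_le _ _
    _ ≤ (∑' n, wc1 p n) * ‖x - y‖ + (∑' n, wc1 q n) * ‖x - y‖ := by
        rw [RCLike.norm_conj]
        exact add_le_add h1 h2
    _ = ((∑' n, wc1 p n) + (∑' n, wc1 q n)) * ‖x - y‖ := by ring
    _ = (∑' n, w1 p q n) * ‖x - y‖ := by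
        rw [← Summable.tsum_add (summable_wc1_p hs) (summable_wc1_q hs)]
        congr 1
        apply tsum_congr
        intro n
        unfold wc1 w1
        split_ifs
        · ring
        · ring

lemma Fm_lower (hs : Summable (wt p q)) (hK : ∑' n, wt p q n ≤ 1)
    {x y : ℂ} (hx : ‖x‖ ≤ 1) (hy : ‖y‖ ≤ 1) :
    (1/2) * ‖x - y‖ ≤ ‖Fm p q x - Fm p q y‖ := by
  have h1 := Fm_sub_sub hs hx hy
  have h2 : ‖x - y‖ - ‖Fm p q x - Fm p q y‖ ≤ ‖Fm p q x - Fm p q y - (x - y)‖ := by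
    rw [norm_sub_rev (Fm p q x - Fm p q y) (x - y)]
    exact norm_sub_norm_le _ _
  have h3 := tsum_w1_le hs hK
  have h4 : (∑' n, w1 p q n) * ‖x - y‖ ≤ (1/2) * ‖x - y‖ :=
    mul_le_mul_of_nonneg_right h3 (norm_nonneg _)
  linarith

lemma injOn_Fm (hs : Summable (wt p q)) (hK : ∑' n, wt p q n ≤ 1) :
    Set.InjOn (Fm p q) (ball (0:ℂ) 1) := by
  intro x hx y hy hxy
  rw [mem_ball, dist_zero_right] at hx hy
  have := Fm_lower hs hK (le_of_lt hx) (le_of_lt hy)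
  rw [hxy, sub_self, norm_zero] at this
  have : ‖x - y‖ ≤ 0 := by linarith
  have := norm_eq_zero.mp (le_antisymm this (norm_nonneg _))
  exact sub_eq_zero.mp this



variable {p q : ℕ → ℂ}

lemma continuousOn_tsum_ft (c : ℕ → ℂ) (hc : Summable (wc c)) :
    ContinuousOn (fun z => ∑' n, ft c n z) (closedBall (0:ℂ) 1) := by
  have hT := tendstoUniformlyOn_tsum (f := fun n z => ft c n z) hc
    (s := closedBall (0:ℂ) 1) (fun n z hz => by
      rw [mem_closedBall, dist_zero_right] at hz
      exact norm_ft_le c n hz)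
  apply hT.continuousOn
  apply Filter.Eventually.frequently
  filter_upwards with t
  apply continuousOn_finset_sum
  intro i _
  unfold ft
  split_ifs
  · exact (continuous_const.mul (continuous_pow i)).continuousOn
  · exact continuousOn_const

lemma continuousOn_Hol (hs : Summable (wt p q)) :
    ContinuousOn (Hol p) (closedBall (0:ℂ) 1) :=
  continuous_id.continuousOn.add (continuousOn_tsum_ft p (summable_wc_p hs))

lemma continuousOn_Gol (hs : Summable (wt p q)) :
    ContinuousOn (Gol q) (closedBall (0:ℂ) 1) :=
  continuousOn_tsum_ft q (summable_wc_q hs)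

lemma continuousOn_Fm (hs : Summable (wt p q)) :
    ContinuousOn (Fm p q) (closedBall (0:ℂ) 1) := by
  apply (continuousOn_Hol hs).add
  exact Complex.continuous_conj.comp_continuousOn (continuousOn_Gol hs)

lemma norm_E_le (θ : ℝ) : ‖E θ‖ ≤ 1 := le_of_eq (norm_E θ)

lemma Fm_circle (hs : Summable (wt p q)) (θ : ℝ) : Fm p q (E θ) = cγ p q θ := by
  have hE1 : ‖E θ‖ ≤ 1 := norm_E_le θ
  have hconjG : (starRingEnd ℂ) (Gol q (E θ))
      = ∑' n, (if 2 ≤ n then (starRingEnd ℂ) (q n) * E (-(n*θ)) else 0) := by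
    unfold Gol
    rw [show ((starRingEnd ℂ) : ℂ → ℂ) = (Complex.conjCLE : ℂ → ℂ) from rfl]
    rw [Complex.conjCLE.map_tsum]
    apply tsum_congr
    intro n
    unfold ft
    rw [show ((Complex.conjCLE : ℂ → ℂ) = ((starRingEnd ℂ) : ℂ → ℂ)) from rfl]
    rw [apply_ite (starRingEnd ℂ)]
    congr 1
    · rw [map_mul, map_pow, conj_E, E_pow]
      congr 2
      ring
    · exact map_zero _
  have hsumP : Summable (fun n => ft p n (E θ)) := summable_ft hs p (summable_wc_p hs) hE1
  have hsumC : Summable (fun n => if 2 ≤ n then (starRingEnd ℂ) (q n) * E (-(n*θ)) else 0) := by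
    apply Summable.of_norm_bounded (summable_wc_q hs)
    intro n
    unfold wc
    split_ifs
    · rw [norm_mul, RCLike.norm_conj, norm_E, mul_one]
    · simp
  unfold Fm Hol cγ
  rw [hconjG, add_assoc]
  congr 1
  rw [← Summable.tsum_add hsumP hsumC]
  apply tsum_congr
  intro n
  unfold g0 ft
  split_ifs
  · rw [E_pow]
  · simp

def ftd (c : ℕ → ℂ) (n : ℕ) (z : ℂ) : ℂ := if 2 ≤ n then (n:ℂ) * c n * z^(n-1) else 0

lemma hasDerivAt_ft (c : ℕ → ℂ) (n : ℕ) (z : ℂ) :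
    HasDerivAt (fun z => ft c n z) (ftd c n z) z := by
  unfold ft ftd
  split_ifs with h
  · have := (hasDerivAt_pow n z).const_mul (c n)
    convert this using 1
    case e'_4 => rfl
    case e'_5 => rfl
    ring
  · exact hasDerivAt_const z 0

lemma norm_ftd_le (c : ℕ → ℂ) (n : ℕ) {z : ℂ} (hz : ‖z‖ ≤ 1) :
    ‖ftd c n z‖ ≤ wc1 c n := by
  unfold ftd wc1
  split_ifs with h
  · rw [norm_mul, norm_mul, norm_pow]
    have h1 : ‖z‖^(n-1) ≤ 1 := pow_le_one₀ (norm_nonneg z) hz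
    have h2 : ‖(n:ℂ)‖ = (n:ℝ) := by simp
    rw [h2]
    calc (n:ℝ) * ‖c n‖ * ‖z‖^(n-1) ≤ (n:ℝ) * ‖c n‖ * 1 := by
          apply mul_le_mul_of_nonneg_left h1; positivity
      _ = (n:ℝ) * ‖c n‖ := mul_one _
  · simp

lemma hasDerivAt_tsum_ft (hs : Summable (wt p q)) (c : ℕ → ℂ)
    (hc : Summable (wc c)) (hc1 : Summable (wc1 c)) {z : ℂ} (hz : z ∈ ball (0:ℂ) 1) :
    HasDerivAt (fun z => ∑' n, ft c n z) (∑' n, ftd c n z) z := by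
  apply hasDerivAt_tsum_of_isPreconnected hc1 isOpen_ball
    (convex_ball (0:ℂ) 1).isPreconnected
    (fun n y _ => hasDerivAt_ft c n y)
    (fun n y hy => norm_ftd_le c n (by
      rw [mem_ball, dist_zero_right] at hy; exact hy.le))
    (by simp : (0:ℂ) ∈ ball (0:ℂ) 1)
    (summable_ft hs c hc (by simp))
    hz

lemma tsum_ftd_zero (c : ℕ → ℂ) : ∑' n, ftd c n (0:ℂ) = 0 := by
  have : ∀ n, ftd c n (0:ℂ) = 0 := by
    intro n
    unfold ftd
    split_ifs with h
    · rw [zero_pow (by omega : n - 1 ≠ 0), mul_zero]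
    · rfl
  rw [tsum_congr this, tsum_zero]

lemma interior_lt (hs : Summable (wt p q)) (hK : ∑' n, wt p q n ≤ 1)
    {z : ℂ} (hz : z ∈ ball (0:ℂ) 1) (θ0 : ℝ) :
    ((Fm p q z - cγ p q θ0) * (starRingEnd ℂ) (cw p q θ0)).re < 0 := by
  set c0 : ℂ := cw p q θ0 with hc0
  set Φ : ℂ → ℂ := fun v => Hol p v * (starRingEnd ℂ) c0 + Gol q v * c0 with hΦ
  set C : ℝ := (cγ p q θ0 * (starRingEnd ℂ) c0).re with hC
  have hrel : ∀ v : ℂ, ((Fm p q v - cγ p q θ0) * (starRingEnd ℂ) c0).re = (Φ v).re - C := by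
    intro v
    have h1 : (Fm p q v - cγ p q θ0) * (starRingEnd ℂ) c0
        = Hol p v * (starRingEnd ℂ) c0 + (starRingEnd ℂ) (Gol q v * c0)
          - cγ p q θ0 * (starRingEnd ℂ) c0 := by
      unfold Fm
      rw [map_mul]
      ring
    rw [h1, hΦ, hC]
    simp [Complex.sub_re, Complex.add_re, Complex.conj_re]
  -- boundary estimate
  have hbd : ∀ v ∈ sphere (0:ℂ) 1, ‖Complex.exp (Φ v)‖ ≤ Real.exp C := by
    intro v hv
    rw [mem_sphere_iff_norm, sub_zero] at hv
    have hveq : E (Complex.arg v) = v := by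
      have := Complex.norm_mul_exp_arg_mul_I v
      rw [hv] at this
      simpa [E] using this
    have hψ : (Φ v).re - C ≤ 0 := by
      rw [← hrel v, ← hveq, Fm_circle hs]
      exact ψf_nonpos hs hK θ0 (Complex.arg v)
    rw [Complex.norm_exp]
    exact Real.exp_le_exp.mpr (by linarith)
  -- differentiability
  have hdiffH : DifferentiableOn ℂ (Hol p) (ball (0:ℂ) 1) := by
    intro v hv
    exact (((hasDerivAt_id v).add
      (hasDerivAt_tsum_ft hs p (summable_wc_p hs) (summable_wc1_p hs) hv)).differentiableAt).differentiableWithinAt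
  have hdiffG : DifferentiableOn ℂ (Gol q) (ball (0:ℂ) 1) := by
    intro v hv
    exact ((hasDerivAt_tsum_ft hs q (summable_wc_q hs) (summable_wc1_q hs) hv).differentiableAt).differentiableWithinAt
  have hdiffΦ : DifferentiableOn ℂ Φ (ball (0:ℂ) 1) :=
    (hdiffH.mul_const _).add (hdiffG.mul_const _)
  have hdiffE : DifferentiableOn ℂ (fun v => Complex.exp (Φ v)) (ball (0:ℂ) 1) :=
    hdiffΦ.cexp
  have hcontΦ : ContinuousOn Φ (closedBall (0:ℂ) 1) :=
    ((continuousOn_Hol hs).mul continuousOn_const).add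
      ((continuousOn_Gol hs).mul continuousOn_const)
  have hdc : DiffContOnCl ℂ (fun v => Complex.exp (Φ v)) (ball (0:ℂ) 1) := by
    constructor
    · exact hdiffE
    · rw [closure_ball (0:ℂ) one_ne_zero]
      exact Complex.continuous_exp.comp_continuousOn hcontΦ
  have hweak : ∀ v ∈ closedBall (0:ℂ) 1, (Φ v).re ≤ C := by
    intro v hv
    have := Complex.norm_le_of_forall_mem_frontier_norm_le isBounded_ball hdc
      (by rw [frontier_ball (0:ℂ) one_ne_zero]; exact hbd)
      (by rw [closure_ball (0:ℂ) one_ne_zero]; exact hv)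
    rw [Complex.norm_exp] at this
    exact Real.exp_le_exp.mp this
  -- strictness
  rw [hrel z]
  rcases lt_or_eq_of_le (hweak z (ball_subset_closedBall hz)) with h | h
  · linarith
  · exfalso
    -- maximum attained inside: function is constant, contradiction with derivative at 0
    have hmax : IsMaxOn (norm ∘ (fun v => Complex.exp (Φ v))) (ball (0:ℂ) 1) z := by
      intro v hv
      show ‖Complex.exp (Φ v)‖ ≤ ‖Complex.exp (Φ z)‖
      rw [Complex.norm_exp, Complex.norm_exp, h]
      exact Real.exp_le_exp.mpr (hweak v (ball_subset_closedBall hv))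
    have heqOn := Complex.eqOn_of_isPreconnected_of_isMaxOn_norm
      (convex_ball (0:ℂ) 1).isPreconnected isOpen_ball hdiffE hz hmax
    have h0mem : (0:ℂ) ∈ ball (0:ℂ) 1 := by simp
    have hΦ0 : HasDerivAt Φ ((starRingEnd ℂ) c0) 0 := by
      have hH : HasDerivAt (Hol p) (1 + ∑' n, ftd p n (0:ℂ)) 0 :=
        (hasDerivAt_id 0).add (hasDerivAt_tsum_ft hs p (summable_wc_p hs) (summable_wc1_p hs) h0mem)
      have hG : HasDerivAt (Gol q) (∑' n, ftd q n (0:ℂ)) 0 :=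
        hasDerivAt_tsum_ft hs q (summable_wc_q hs) (summable_wc1_q hs) h0mem
      rw [tsum_ftd_zero] at hH hG
      have := (hH.mul_const ((starRingEnd ℂ) c0)).add (hG.mul_const c0)
      simp at this; exact this
    have hexp : HasDerivAt (fun v => Complex.exp (Φ v)) (Complex.exp (Φ 0) * (starRingEnd ℂ) c0) 0 :=
      hΦ0.cexp
    have hconst : HasDerivAt (fun v => Complex.exp (Φ v)) 0 0 := by
      have hev : (fun v => Complex.exp (Φ v)) =ᶠ[nhds (0:ℂ)]
          (fun _ => Complex.exp (Φ z)) := by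
        filter_upwards [isOpen_ball.mem_nhds h0mem] with x hx
        exact heqOn hx
      exact (hasDerivAt_const (0:ℂ) (Complex.exp (Φ z))).congr_of_eventuallyEq hev
    have huniq := hexp.unique hconst
    have h1 : Complex.exp (Φ 0) ≠ 0 := Complex.exp_ne_zero _
    have h2 : (starRingEnd ℂ) c0 ≠ 0 := by
      simpa using cw_ne_zero hs hK θ0
    exact (mul_ne_zero h1 h2) huniq



variable {p q : ℕ → ℂ}

lemma T_lip (hs : Summable (wt p q)) (hK : ∑' n, wt p q n ≤ 1)
    {x y : ℂ} (hx : ‖x‖ ≤ 1) (hy : ‖y‖ ≤ 1) :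
    ‖(Fm p q x - x) - (Fm p q y - y)‖ ≤ (1/2) * ‖x - y‖ := by
  have h1 := Fm_sub_sub hs hx hy
  have h3 := tsum_w1_le hs hK
  have h4 : (∑' n, w1 p q n) * ‖x - y‖ ≤ (1/2) * ‖x - y‖ :=
    mul_le_mul_of_nonneg_right h3 (norm_nonneg _)
  have heq : (Fm p q x - x) - (Fm p q y - y) = Fm p q x - Fm p q y - (x - y) := by ring
  rw [heq]
  linarith

lemma isOpen_image_Fm (hs : Summable (wt p q)) (hK : ∑' n, wt p q n ≤ 1) :
    IsOpen (Fm p q '' ball (0:ℂ) 1) := by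
  rw [Metric.isOpen_iff]
  rintro w ⟨z1, hz1, rfl⟩
  rw [mem_ball, dist_zero_right] at hz1
  set ρ : ℝ := (1 - ‖z1‖)/2 with hρdef
  have hρpos : 0 < ρ := by
    have := hz1; simp only [hρdef]; linarith
  refine ⟨ρ/4, by positivity, ?_⟩
  intro w' hw'
  rw [mem_ball, dist_eq_norm] at hw'
  set s : Set ℂ := closedBall z1 ρ with hsdef
  have hsub : ∀ v ∈ s, ‖v‖ ≤ 1 := by
    intro v hv
    rw [hsdef, mem_closedBall, dist_eq_norm] at hv
    calc ‖v‖ = ‖z1 + (v - z1)‖ := by ring_nf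
      _ ≤ ‖z1‖ + ‖v - z1‖ := norm_add_le _ _
      _ ≤ ‖z1‖ + ρ := by linarith [hv]; 
      _ ≤ 1 := by rw [hρdef]; linarith
  have hsubBall : s ⊆ ball (0:ℂ) 1 := by
    intro v hv
    rw [mem_ball, dist_zero_right]
    rw [hsdef, mem_closedBall, dist_eq_norm] at hv
    have : ‖v‖ ≤ ‖z1‖ + ρ := by
      calc ‖v‖ = ‖z1 + (v - z1)‖ := by ring_nf
        _ ≤ ‖z1‖ + ‖v - z1‖ := norm_add_le _ _
        _ ≤ ‖z1‖ + ρ := by linarith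
    have : ‖z1‖ + ρ < 1 := by rw [hρdef]; linarith
    linarith
  set φ : ℂ → ℂ := fun v => w' - (Fm p q v - v) with hφdef
  have hz1s : z1 ∈ s := by
    rw [hsdef, mem_closedBall]; simp [hρpos.le]
  have hz1n : ‖z1‖ ≤ 1 := hz1.le
  have hmaps : MapsTo φ s s := by
    intro v hv
    rw [hsdef, mem_closedBall, dist_eq_norm]
    have hlip := T_lip hs hK (hsub v hv) hz1n
    have hcalc : φ v - z1 = (w' - Fm p q z1) + ((Fm p q z1 - z1) - (Fm p q v - v)) := by
      rw [hφdef]; ring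
    rw [hcalc]
    calc ‖_ + _‖ ≤ ‖w' - Fm p q z1‖ + ‖(Fm p q z1 - z1) - (Fm p q v - v)‖ := norm_add_le _ _
      _ ≤ ρ/4 + (1/2) * ‖z1 - v‖ := by
          apply add_le_add hw'.le
          rw [norm_sub_rev ((Fm p q z1 - z1)) _]
          have := T_lip hs hK (hsub v hv) hz1n
          calc ‖(Fm p q v - v) - (Fm p q z1 - z1)‖ ≤ (1/2) * ‖v - z1‖ := this
            _ = (1/2) * ‖z1 - v‖ := by rw [norm_sub_rev]
      _ ≤ ρ/4 + (1/2) * ρ := by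
          have : ‖z1 - v‖ ≤ ρ := by
            rw [hsdef, mem_closedBall, dist_eq_norm, norm_sub_rev] at hv
            exact hv
          linarith
      _ ≤ ρ := by linarith
  have hlipOn : LipschitzOnWith (1/2 : ℝ≥0) φ s := by
    apply LipschitzOnWith.of_dist_le_mul
    intro x hx y hy
    rw [dist_eq_norm, dist_eq_norm]
    have : φ x - φ y = (Fm p q y - y) - (Fm p q x - x) := by rw [hφdef]; ring
    rw [this]
    have := T_lip hs hK (hsub y hy) (hsub x hx)
    calc ‖(Fm p q y - y) - (Fm p q x - x)‖ ≤ (1/2) * ‖y - x‖ := this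
      _ = ((1/2 : ℝ≥0) : ℝ) * ‖x - y‖ := by rw [norm_sub_rev]; norm_num
  have hcontr : ContractingWith (1/2 : ℝ≥0) (hmaps.restrict φ s s) := by
    constructor
    · rw [← NNReal.coe_lt_coe]; norm_num
    · exact hlipOn.to_restrict
  obtain ⟨y, hys, hyfix, -⟩ := hcontr.exists_fixedPoint' (Metric.isClosed_closedBall.isComplete)
    hmaps hz1s (edist_ne_top _ _)
  refine ⟨y, hsubBall hys, ?_⟩
  have : φ y = y := hyfix
  rw [hφdef] at this
  simp only at this
  have : Fm p q y = w' := by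
    have h2 : w' - (Fm p q y - y) = y := this
    linear_combination -h2
  exact this

def Ωs (p q : ℕ → ℂ) : Set ℂ :=
  {ω | ∀ θ0 : ℝ, ((ω - cγ p q θ0) * (starRingEnd ℂ) (cw p q θ0)).re < 0}

lemma convex_Ωs : Convex ℝ (Ωs p q) := by
  intro x hx y hy a b ha hb hab
  intro θ0
  have hx0 := hx θ0
  have hy0 := hy θ0
  have habC : (a:ℂ) + (b:ℂ) = 1 := by exact_mod_cast hab
  have hz : a • x + b • y - cγ p q θ0
      = (a:ℂ) * (x - cγ p q θ0) + (b:ℂ) * (y - cγ p q θ0) := by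
    rw [Complex.real_smul, Complex.real_smul]
    linear_combination (cγ p q θ0) * habC
  rw [hz, add_mul, mul_assoc, mul_assoc, Complex.add_re,
    Complex.re_ofReal_mul, Complex.re_ofReal_mul]
  rcases eq_or_lt_of_le ha with haz | hap
  · have hb1 : b = 1 := by linarith
    rw [← haz, hb1]; simpa using hy0
  · have h1 : a * ((x - cγ p q θ0) * (starRingEnd ℂ) (cw p q θ0)).re < 0 :=
      mul_neg_of_pos_of_neg hap hx0
    have h2 : b * ((y - cγ p q θ0) * (starRingEnd ℂ) (cw p q θ0)).re ≤ 0 :=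
      mul_nonpos_of_nonneg_of_nonpos hb hy0.le
    linarith

lemma image_subset_Ωs (hs : Summable (wt p q)) (hK : ∑' n, wt p q n ≤ 1) :
    Fm p q '' ball (0:ℂ) 1 ⊆ Ωs p q := by
  rintro ω ⟨z, hz, rfl⟩
  intro θ0
  exact interior_lt hs hK hz θ0

lemma closure_cap (hs : Summable (wt p q)) (hK : ∑' n, wt p q n ≤ 1) :
    ∀ ω ∈ Ωs p q, ω ∈ closure (Fm p q '' ball (0:ℂ) 1) → ω ∈ Fm p q '' ball (0:ℂ) 1 := by
  intro ω hω hcl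
  obtain ⟨f, hfmem, hfconv⟩ := mem_closure_iff_seq_limit.mp hcl
  choose g hgball hgF using hfmem
  have hgcb : ∀ n, g n ∈ closedBall (0:ℂ) 1 := fun n => ball_subset_closedBall (hgball n)
  have hgn : ∀ n, ‖g n‖ ≤ 1 := by
    intro n; have := hgcb n; rwa [mem_closedBall, dist_zero_right] at this
  have hcf : CauchySeq f := hfconv.cauchySeq
  have hcg : CauchySeq g := by
    rw [Metric.cauchySeq_iff] at hcf ⊢
    intro ε hε
    obtain ⟨N, hN⟩ := hcf (ε/4) (by linarith)
    refine ⟨N, fun m hm n hn => ?_⟩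
    have h1 := Fm_lower hs hK (hgn m) (hgn n)
    rw [hgF m, hgF n] at h1
    have h2 := hN m hm n hn
    rw [dist_eq_norm] at h2 ⊢
    linarith
  obtain ⟨ζ, hζ⟩ := cauchySeq_tendsto_of_complete hcg
  have hζcb : ζ ∈ closedBall (0:ℂ) 1 :=
    Metric.isClosed_closedBall.mem_of_tendsto hζ (Filter.Eventually.of_forall hgcb)
  have hFmζ : Filter.Tendsto (fun n => Fm p q (g n)) Filter.atTop (nhds (Fm p q ζ)) := by
    have hcw := (continuousOn_Fm hs) ζ hζcb
    exact hcw.tendsto.comp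
      (tendsto_nhdsWithin_of_tendsto_nhds_of_eventually_within _ hζ
        (Filter.Eventually.of_forall hgcb))
  have hfeq : (fun n => Fm p q (g n)) = f := funext hgF
  rw [hfeq] at hFmζ
  have hωζ : Fm p q ζ = ω := tendsto_nhds_unique hFmζ hfconv
  rw [mem_closedBall, dist_zero_right] at hζcb
  rcases lt_or_eq_of_le hζcb with hlt | heq1
  · exact ⟨ζ, by rwa [mem_ball, dist_zero_right], hωζ⟩
  · exfalso
    have hveq : E (Complex.arg ζ) = ζ := by
      have h := Complex.norm_mul_exp_arg_mul_I ζ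
      rw [heq1] at h
      simpa [E] using h
    have : Fm p q ζ = cγ p q (Complex.arg ζ) := by
      calc Fm p q ζ = Fm p q (E (Complex.arg ζ)) := by rw [hveq]
        _ = cγ p q (Complex.arg ζ) := Fm_circle hs _
    have hcontra := hω (Complex.arg ζ)
    rw [← hωζ, this, sub_self, zero_mul] at hcontra
    simp at hcontra

theorem main_aux (hs : Summable (wt p q)) (hK : ∑' n, wt p q n ≤ 1) :
    Set.InjOn (Fm p q) (ball (0:ℂ) 1) ∧ Convex ℝ (Fm p q '' ball (0:ℂ) 1) := by
  refine ⟨injOn_Fm hs hK, ?_⟩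
  have himg : Fm p q '' ball (0:ℂ) 1 = Ωs p q := by
    apply subset_antisymm (image_subset_Ωs hs hK)
    set u : Set ℂ := Fm p q '' ball (0:ℂ) 1 with hudef
    set v : Set ℂ := (closure u)ᶜ with hvdef
    have hvopen : IsOpen v := isClosed_closure.isOpen_compl
    have huopen : IsOpen u := isOpen_image_Fm hs hK
    have hcover : Ωs p q ⊆ u ∪ v := by
      intro ω hω
      by_cases hc : ω ∈ closure u
      · exact Or.inl (closure_cap hs hK ω hω hc)
      · exact Or.inr hc
    have hne : (Ωs p q ∩ u).Nonempty := by
      refine ⟨Fm p q 0, ?_, ⟨0, by simp, rfl⟩⟩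
      exact image_subset_Ωs hs hK ⟨0, by simp, rfl⟩
    by_cases hv : (Ωs p q ∩ v).Nonempty
    · exfalso
      obtain ⟨ω, hω1, hω2⟩ := (convex_Ωs (p := p) (q := q)).isPreconnected
        u v huopen hvopen hcover hne hv
      exact hω2.2 (subset_closure hω2.1)
    · intro ω hω
      rcases hcover hω with h | h
      · exact h
      · exact (hv ⟨ω, hω, h⟩).elim
  rw [himg]
  exact convex_Ωs


end HCX

section Final
open Complex Metric Set

namespace HCX

lemma arith_bound {n : ℕ} (hn : 2 ≤ n) {lam x y α β : ℝ}
    (hlam1 : 1/2 ≤ lam) (hx : 0 ≤ x) (hy : 0 ≤ y) (hα : 0 ≤ α) (hβ : 0 ≤ β)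
    (hA2 : 2*α ≤ (n:ℝ)+1) (hB2 : 2*β ≤ (n:ℝ)-1) :
    (n:ℝ)*(x*α) + ((n:ℝ)+2)*(y*β) ≤ (n:ℝ)*(lam*n+1-lam)*(x+y) := by
  have hn2 : (2:ℝ) ≤ (n:ℝ) := by exact_mod_cast hn
  have hμ : ((n:ℝ)+1)/2 ≤ lam*n+1-lam := by nlinarith
  nlinarith [mul_le_mul_of_nonneg_left (show α ≤ ((n:ℝ)+1)/2 by linarith)
      (mul_nonneg (show (0:ℝ) ≤ (n:ℝ) by linarith) hx),
    mul_le_mul_of_nonneg_left (show β ≤ ((n:ℝ)-1)/2 by linarith)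
      (mul_nonneg (show (0:ℝ) ≤ (n:ℝ)+2 by linarith) hy),
    mul_le_mul_of_nonneg_left hμ (mul_nonneg (show (0:ℝ) ≤ (n:ℝ) by linarith) hx),
    mul_le_mul_of_nonneg_left hμ (mul_nonneg (show (0:ℝ) ≤ (n:ℝ) by linarith) hy),
    mul_nonneg hy (show (0:ℝ) ≤ (n:ℝ) by linarith)]

/-- `harmMap p q` agrees with `Fm p q` on the closed unit ball. -/
lemma harmMap_eq_Fm (p q : ℕ → ℂ) (hs : Summable (wt p q)) {z : ℂ} (hz : ‖z‖ ≤ 1) :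
    (z + ∑' n : ℕ, if 2 ≤ n then
      p n * z ^ n + (starRingEnd ℂ) (q n) * ((starRingEnd ℂ) z) ^ n else 0)
    = Fm p q z := by
  have hconjG : (starRingEnd ℂ) (Gol q z)
      = ∑' n, (if 2 ≤ n then (starRingEnd ℂ) (q n) * ((starRingEnd ℂ) z)^n else 0) := by
    unfold Gol
    rw [show ((starRingEnd ℂ) : ℂ → ℂ) = (Complex.conjCLE : ℂ → ℂ) from rfl]
    rw [Complex.conjCLE.map_tsum]
    apply tsum_congr
    intro n
    unfold ft
    rw [show ((Complex.conjCLE : ℂ → ℂ) = ((starRingEnd ℂ) : ℂ → ℂ)) from rfl]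
    rw [apply_ite (starRingEnd ℂ)]
    congr 1
    · rw [map_mul, map_pow]
    · exact map_zero _
  have hsumP : Summable (fun n => ft p n z) := summable_ft hs p (summable_wc_p hs) hz
  have hsumC : Summable (fun n =>
      if 2 ≤ n then (starRingEnd ℂ) (q n) * ((starRingEnd ℂ) z)^n else 0) := by
    apply Summable.of_norm_bounded (summable_wc_q hs)
    intro n
    unfold wc
    split_ifs
    · rw [norm_mul, norm_pow, RCLike.norm_conj, RCLike.norm_conj]
      calc ‖q n‖ * ‖z‖^n ≤ ‖q n‖ * 1 :=
            mul_le_mul_of_nonneg_left (pow_le_one₀ (norm_nonneg z) hz) (norm_nonneg _)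
        _ = ‖q n‖ := mul_one _
    · simp
  unfold Fm Hol
  rw [hconjG, add_assoc]
  congr 1
  rw [← Summable.tsum_add hsumP hsumC]
  apply tsum_congr
  intro n
  unfold ft
  split_ifs
  · rfl
  · simp

end HCX

end Final

/-- If `F ∈ HS_1^0(λ)` with `1/2 ≤ λ ≤ 1` and the coefficients of `H` satisfy the
bounds valid on the class `C_H^0` of harmonic univalent convex mappings, then the
integral convolution `F⋄H` belongs to `HC^0`, is univalent on the unit disk, and its
image is convex. -/
theorem integral_convolution_univalent_convex
    (lam : ℝ) (hlam : lam ∈ Set.Icc (1 / 2 : ℝ) 1)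
    (a b A B : ℕ → ℂ)
    (hab : Summable (fun n : ℕ => ‖a n‖ + ‖b n‖))
    (habSum : Summable (fun n : ℕ => if 2 ≤ n then
      (n : ℝ) * (lam * n + 1 - lam) * (‖a n‖ + ‖b n‖) else 0))
    (hF : ∑' n : ℕ, (if 2 ≤ n then
      (n : ℝ) * (lam * n + 1 - lam) * (‖a n‖ + ‖b n‖) else 0) ≤ 1)
    (hA : ∀ n : ℕ, 2 ≤ n → 2 * ‖A n‖ ≤ (n : ℝ) + 1)
    (hB : ∀ n : ℕ, 2 ≤ n → 2 * ‖B n‖ ≤ (n : ℝ) - 1) :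
    (∑' n : ℕ, (if 2 ≤ n then
        (n : ℝ) ^ 2 * (‖a n * A n‖ + ‖b n * B n‖) / n else 0)
      ≤ 1) ∧
    Set.InjOn (harmMap (fun n => a n * A n / n) (fun n => b n * B n / n))
      (Metric.ball (0 : ℂ) 1) ∧
    Convex ℝ (harmMap (fun n => a n * A n / n) (fun n => b n * B n / n) ''
      Metric.ball (0 : ℂ) 1) := by
  obtain ⟨hlam1, hlam2⟩ := hlam
  set p : ℕ → ℂ := fun n => a n * A n / n with hp
  set q : ℕ → ℂ := fun n => b n * B n / n with hq
  -- norms of the coefficients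
  have hpn : ∀ n : ℕ, 2 ≤ n → ‖p n‖ = ‖a n‖ * ‖A n‖ / n := by
    intro n hn
    rw [hp]
    simp only [norm_div, norm_mul, Complex.norm_natCast]
  have hqn : ∀ n : ℕ, 2 ≤ n → ‖q n‖ = ‖b n‖ * ‖B n‖ / n := by
    intro n hn
    rw [hq]
    simp only [norm_div, norm_mul, Complex.norm_natCast]
  -- comparison with the given summable majorant
  have habs_nonneg : ∀ z : ℂ, 0 ≤ ‖z‖ := fun z => norm_nonneg z
  have hwt_le : ∀ n : ℕ, HCX.wt p q n ≤ (if 2 ≤ n then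
      (n : ℝ) * (lam * n + 1 - lam) * (‖a n‖ + ‖b n‖) else 0) := by
    intro n
    unfold HCX.wt
    split_ifs with hn
    · have hn2 : (2:ℝ) ≤ (n:ℝ) := by exact_mod_cast hn
      have hn0 : (0:ℝ) < (n:ℝ) := by linarith
      rw [hpn n hn, hqn n hn]
      have e1 : (n:ℝ)^2 * (‖a n‖ * ‖A n‖ / n)
          = (n:ℝ) * (‖a n‖ * ‖A n‖) := by
        field_simp
      have e2 : ((n:ℝ)^2 + 2*n) * (‖b n‖ * ‖B n‖ / n)
          = ((n:ℝ)+2) * (‖b n‖ * ‖B n‖) := by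
        field_simp
      rw [e1, e2]
      exact HCX.arith_bound hn hlam1 (habs_nonneg _) (habs_nonneg _) (habs_nonneg _)
        (habs_nonneg _) (hA n hn) (hB n hn)
    · exact le_refl 0
  have hswt : Summable (HCX.wt p q) :=
    habSum.of_nonneg_of_le (HCX.wt_nonneg p q) hwt_le
  have hKwt : ∑' n, HCX.wt p q n ≤ 1 :=
    le_trans (Summable.tsum_le_tsum hwt_le hswt habSum) hF
  obtain ⟨hinj, hconv⟩ := HCX.main_aux hswt hKwt
  have heqOn : Set.EqOn (harmMap p q) (HCX.Fm p q) (Metric.ball (0:ℂ) 1) := by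
    intro z hz
    rw [Metric.mem_ball, dist_zero_right] at hz
    unfold harmMap
    exact HCX.harmMap_eq_Fm p q hswt hz.le
  refine ⟨?_, ?_, ?_⟩
  · -- the coefficient inequality
    have hG_le : ∀ n : ℕ, (if 2 ≤ n then
        (n : ℝ) ^ 2 * (‖a n * A n‖ + ‖b n * B n‖) / n else 0)
        ≤ (if 2 ≤ n then
        (n : ℝ) * (lam * n + 1 - lam) * (‖a n‖ + ‖b n‖) else 0) := by
      intro n
      split_ifs with hn
      · have hn2 : (2:ℝ) ≤ (n:ℝ) := by exact_mod_cast hn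
        have hn0 : (0:ℝ) < (n:ℝ) := by linarith
        rw [norm_mul, norm_mul]
        have e3 : (n:ℝ)^2 * (‖a n‖ * ‖A n‖
            + ‖b n‖ * ‖B n‖) / n
            = (n:ℝ) * (‖a n‖ * ‖A n‖)
              + (n:ℝ) * (‖b n‖ * ‖B n‖) := by
          field_simp
        rw [e3]
        have h4 : (n:ℝ) * (‖b n‖ * ‖B n‖)
            ≤ ((n:ℝ)+2) * (‖b n‖ * ‖B n‖) := by
          apply mul_le_mul_of_nonneg_right (by linarith)
          exact mul_nonneg (habs_nonneg _) (habs_nonneg _)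
        have h5 := HCX.arith_bound hn hlam1 (habs_nonneg (a n)) (habs_nonneg (b n))
          (habs_nonneg (A n)) (habs_nonneg (B n)) (hA n hn) (hB n hn)
        linarith
      · exact le_refl 0
    have hGnn : ∀ n : ℕ, 0 ≤ (if 2 ≤ n then
        (n : ℝ) ^ 2 * (‖a n * A n‖ + ‖b n * B n‖) / n else 0) := by
      intro n
      split_ifs with hn
      · have : (0:ℝ) < (n:ℝ) := by
          have : (2:ℝ) ≤ (n:ℝ) := by exact_mod_cast hn
          linarith
        positivity
      · exact le_refl 0
    have hGS : Summable (fun n : ℕ => if 2 ≤ n then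
        (n : ℝ) ^ 2 * (‖a n * A n‖ + ‖b n * B n‖) / n else 0) :=
      habSum.of_nonneg_of_le hGnn hG_le
    exact le_trans (Summable.tsum_le_tsum hG_le hGS habSum) hF
  · exact hinj.congr heqOn.symm
  · rw [Set.image_congr heqOn]
    exact hconv
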